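/- arXiv:math/0501009 — 5 statements merged into one kernel-verified Lean document; each statement's English description precedes it below -/
import Mathlib

section
/- Let q > 0, C > 0, and let a be a real number with 0 < a < 1. Let V : (0,∞) → ℝ be a function with V(r) > 0 for all r > 0, and suppose that for every r > 0 one has V(r) ≥ (r/(2C))^q · V(r/2)^a. Then for every natural number k and every r > 0, V(r) ≥ (r/C)^{q·Σ_{i=0}^{k} aⁱ} · 2^{−q·Σ_{i=0}^{k} (i+1)aⁱ} · V(r/2^{k+1})^{a^{k+1}}. -/
/-- Iteration step in the proof of Theorem 1.2. -/
theorem stmt_1 (q C a : ℝ) (hq : 0 < q) (hC : 0 < C) (ha0 : 0 < a) (ha1 : a < 1)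
    (V : ℝ → ℝ) (hpos : ∀ r : ℝ, 0 < r → 0 < V r)
    (hstep : ∀ r : ℝ, 0 < r → V r ≥ (r / (2 * C)) ^ q * V (r / 2) ^ a) :
    ∀ (k : ℕ) (r : ℝ), 0 < r →
      V r ≥ (r / C) ^ (q * ∑ i ∈ Finset.range (k + 1), a ^ i) *
        2 ^ (-(q * ∑ i ∈ Finset.range (k + 1), ((i : ℝ) + 1) * a ^ i)) *
        V (r / 2 ^ (k + 1)) ^ (a ^ (k + 1)) := by
  intro k
  induction k with
  | zero =>
    intro r hr
    have h := hstep r hr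
    have hrC : (0:ℝ) < r / C := by positivity
    have e1 : r / (2 * C) = (r / C) * (2:ℝ)⁻¹ := by ring
    have e2 : (r / (2 * C)) ^ q = (r / C) ^ q * (2:ℝ) ^ (-q) := by
      rw [e1, Real.mul_rpow hrC.le (by norm_num), Real.inv_rpow (by norm_num),
        ← Real.rpow_neg (by norm_num)]
    simp only [Finset.sum_range_one, pow_zero, Nat.cast_zero, zero_add, one_mul, mul_one,
      pow_one] at *
    rw [e2] at h
    exact h
  | succ k ih =>
    intro r hr
    have hr2 : (0:ℝ) < r / 2 := by positivity
    have h1 := hstep r hr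
    have h2 := ih (r / 2) hr2
    set S : ℝ := ∑ i ∈ Finset.range (k + 1), a ^ i with hS
    set T : ℝ := ∑ i ∈ Finset.range (k + 1), ((i : ℝ) + 1) * a ^ i with hT
    have hSs : ∑ i ∈ Finset.range (k + 1 + 1), a ^ i = a * S + 1 := by
      rw [Finset.sum_range_succ' (fun i => a ^ i)]
      simp [hS, Finset.mul_sum, pow_succ, mul_comm]
    have hTs : ∑ i ∈ Finset.range (k + 1 + 1), ((i : ℝ) + 1) * a ^ i = a * (T + S) + 1 := by
      rw [Finset.sum_range_succ' (fun i => ((i : ℝ) + 1) * a ^ i)]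
      push_cast
      rw [hT, hS, ← Finset.sum_add_distrib, Finset.mul_sum]
      simp only [pow_zero, mul_one, Nat.cast_zero, zero_add]
      congr 1
      apply Finset.sum_congr rfl
      intro i _
      push_cast
      ring
    rw [hSs, hTs]
    have harg : r / 2 / 2 ^ (k + 1) = r / 2 ^ (k + 1 + 1) := by
      rw [div_div, ← pow_succ']
    rw [harg] at h2
    -- positivity facts
    have hrC : (0:ℝ) < r / C := by positivity
    have hVp : (0:ℝ) < V (r / 2 ^ (k + 1 + 1)) := hpos _ (by positivity)
    have hIH : (0:ℝ) ≤ (r / 2 / C) ^ (q * S) * 2 ^ (-(q * T)) *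
        V (r / 2 ^ (k + 1 + 1)) ^ a ^ (k + 1) := by positivity
    have hmono : V (r / 2) ^ a ≥ ((r / 2 / C) ^ (q * S) * 2 ^ (-(q * T)) *
        V (r / 2 ^ (k + 1 + 1)) ^ a ^ (k + 1)) ^ a :=
      Real.rpow_le_rpow hIH h2 ha0.le
    have hmul : V r ≥ (r / (2 * C)) ^ q * ((r / 2 / C) ^ (q * S) * 2 ^ (-(q * T)) *
        V (r / 2 ^ (k + 1 + 1)) ^ a ^ (k + 1)) ^ a := by
      calc V r ≥ (r / (2 * C)) ^ q * V (r / 2) ^ a := h1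
        _ ≥ _ := by
            apply mul_le_mul_of_nonneg_left hmono (by positivity)
    refine le_trans (le_of_eq ?_) hmul
    -- now the algebraic equality
    rw [Real.mul_rpow (by positivity) (by positivity),
      Real.mul_rpow (by positivity) (by positivity),
      ← Real.rpow_mul (by positivity : (0:ℝ) ≤ r / 2 / C),
      ← Real.rpow_mul (by positivity : (0:ℝ) ≤ (2:ℝ)),
      ← Real.rpow_mul hVp.le]
    have e1 : r / (2 * C) = (r / C) / 2 := by ring
    have e2 : r / 2 / C = (r / C) / 2 := by ring
    have hrCne : r / C ≠ 0 := ne_of_gt hrC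
    rw [e1, e2]
    have hdiv : (0:ℝ) < (r / C) / 2 := by positivity
    simp only [Real.rpow_def_of_pos hrC, Real.rpow_def_of_pos hdiv,
      Real.rpow_def_of_pos (show (0:ℝ) < 2 by norm_num), Real.rpow_def_of_pos hVp,
      ← Real.exp_add]
    congr 1
    rw [Real.log_div hrCne (by norm_num)]
    ring
end

section
/- Let n ≥ 2 be an integer, let q be a real number with 1 ≤ q < n, define p by 1/p = 1/q − 1/n, let θ ∈ [0,1), let s > 0, define t by 1/t = θ/s + (1−θ)/p, and let C > 0 and k > 1. Let V : (0,∞) → ℝ be a function with V(r) > 0 for all r > 0 such that for every r > 0: (i) V(r)^{1/t} ≤ C · ((k−1)r)^{−(1−θ)} · V(kr)^{θ/s + (1−θ)/q}, and (ii) V(kr) ≤ kⁿ · V(r). Then for every r > 0, V(r) ≥ (k−1)ⁿ · C^{−n/(1−θ)} · k^{−(n²θ/(s(1−θ)) + n²/q)} · rⁿ. -/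
/-- Abstract volume lower bound inside the proof of Theorem 1.3. -/
theorem stmt_3 (n : ℕ) (hn : 2 ≤ n) (q p θ s t C k : ℝ)
    (hq1 : 1 ≤ q) (hqn : q < n) (hp : 1 / p = 1 / q - 1 / (n : ℝ))
    (hθ0 : 0 ≤ θ) (hθ1 : θ < 1) (hs : 0 < s)
    (ht : 1 / t = θ / s + (1 - θ) / p)
    (hC : 0 < C) (hk : 1 < k)
    (V : ℝ → ℝ) (hpos : ∀ r : ℝ, 0 < r → 0 < V r)
    (hineq : ∀ r : ℝ, 0 < r →
      V r ^ (1 / t) ≤ C * ((k - 1) * r) ^ (-(1 - θ)) * V (k * r) ^ (θ / s + (1 - θ) / q))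
    (hdoubling : ∀ r : ℝ, 0 < r → V (k * r) ≤ k ^ (n : ℝ) * V r) :
    ∀ r : ℝ, 0 < r →
      V r ≥ (k - 1) ^ (n : ℝ) * C ^ (-((n : ℝ) / (1 - θ))) *
        k ^ (-((n : ℝ) ^ 2 * θ / (s * (1 - θ)) + (n : ℝ) ^ 2 / q)) * r ^ (n : ℝ) := by
  intro r hr
  have h1θ : 0 < 1 - θ := by linarith
  have hq0 : 0 < q := by linarith
  have hn0 : (0 : ℝ) < n := by
    have : (2 : ℝ) ≤ n := by exact_mod_cast hn
    linarith
  have hk0 : (0 : ℝ) < k := by linarith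
  have hk1 : 0 < k - 1 := by linarith
  set a : ℝ := θ / s + (1 - θ) / q with ha
  have ha0 : 0 ≤ a := by positivity
  have hA : 0 < V r := hpos r hr
  have hB : 0 < V (k * r) := hpos (k * r) (by positivity)
  have hX : (0 : ℝ) < ((k - 1) * r) ^ (-(1 - θ)) := by positivity
  -- exponent identity
  have htval : 1 / t = a - (1 - θ) / n := by
    have hp' : (1 - θ) / p = (1 - θ) * (1 / p) := by ring
    rw [ht, hp', hp, ha]; ring
  -- step 1: V(kr)^a ≤ k^(n*a) * V r ^ a
  have step1 : V (k * r) ^ a ≤ k ^ ((n : ℝ) * a) * V r ^ a := by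
    calc V (k * r) ^ a ≤ (k ^ (n : ℝ) * V r) ^ a :=
          Real.rpow_le_rpow hB.le (hdoubling r hr) ha0
      _ = k ^ ((n : ℝ) * a) * V r ^ a := by
          rw [Real.mul_rpow (by positivity) hA.le, ← Real.rpow_mul hk0.le]
  have step2 : V r ^ (1 / t) ≤ C * ((k - 1) * r) ^ (-(1 - θ)) * (k ^ ((n : ℝ) * a) * V r ^ a) := by
    refine le_trans (hineq r hr) ?_
    have := mul_le_mul_of_nonneg_left step1 (le_of_lt (by positivity :
      (0:ℝ) < C * ((k - 1) * r) ^ (-(1 - θ))))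
    linarith [this]
  -- rewrite V r ^ (1/t) = V r ^ a * V r ^ (-(1-θ)/n)
  have hsplit : V r ^ (1 / t) = V r ^ a * V r ^ (-((1 - θ) / n)) := by
    rw [← Real.rpow_add hA, htval]; ring_nf
  -- divide by V r ^ a > 0
  have hVa : 0 < V r ^ a := Real.rpow_pos_of_pos hA a
  have step3 : V r ^ (-((1 - θ) / n)) ≤ C * ((k - 1) * r) ^ (-(1 - θ)) * k ^ ((n : ℝ) * a) := by
    rw [hsplit] at step2
    have h := step2
    rw [mul_comm (V r ^ a) (V r ^ (-((1 - θ) / n)))] at h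
    have h2 : V r ^ (-((1 - θ) / n)) * V r ^ a ≤
        (C * ((k - 1) * r) ^ (-(1 - θ)) * k ^ ((n : ℝ) * a)) * V r ^ a := by
      calc V r ^ (-((1 - θ) / n)) * V r ^ a ≤
            C * ((k - 1) * r) ^ (-(1 - θ)) * (k ^ ((n : ℝ) * a) * V r ^ a) := h
        _ = (C * ((k - 1) * r) ^ (-(1 - θ)) * k ^ ((n : ℝ) * a)) * V r ^ a := by ring
    exact le_of_mul_le_mul_right h2 hVa
  -- invert
  set R : ℝ := C * ((k - 1) * r) ^ (-(1 - θ)) * k ^ ((n : ℝ) * a) with hR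
  have hRpos : 0 < R := by positivity
  have hepos : 0 < (1 - θ) / n := by positivity
  have hinv : R⁻¹ ≤ V r ^ ((1 - θ) / n) := by
    have h1 : (V r ^ ((1 - θ) / n))⁻¹ ≤ R := by
      rw [← Real.rpow_neg hA.le]
      exact step3
    calc R⁻¹ ≤ ((V r ^ ((1 - θ) / n))⁻¹)⁻¹ :=
          inv_anti₀ (by positivity) h1
      _ = V r ^ ((1 - θ) / n) := inv_inv _
  -- raise to power m = n/(1-θ)
  set m : ℝ := (n : ℝ) / (1 - θ) with hm
  have hmpos : 0 < m := by positivity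
  have hfinal : (R⁻¹) ^ m ≤ V r := by
    have := Real.rpow_le_rpow (by positivity) hinv hmpos.le
    rwa [← Real.rpow_mul hA.le, div_mul_div_comm, mul_comm (1 - θ) (n:ℝ),
      div_self (by positivity : ((n:ℝ) * (1 - θ)) ≠ 0), Real.rpow_one] at this
  -- compute (R⁻¹)^m
  have hcomp : (R⁻¹) ^ m = (k - 1) ^ (n : ℝ) * C ^ (-((n : ℝ) / (1 - θ))) *
      k ^ (-((n : ℝ) ^ 2 * θ / (s * (1 - θ)) + (n : ℝ) ^ 2 / q)) * r ^ (n : ℝ) := by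
    have hRinv : R⁻¹ = C⁻¹ * ((k - 1) * r) ^ (1 - θ) * k ^ (-((n : ℝ) * a)) := by
      rw [hR, Real.rpow_neg (by positivity : (0:ℝ) ≤ (k-1)*r),
        Real.rpow_neg hk0.le]
      field_simp
    have e1 : C⁻¹ ^ m = C ^ (-((n : ℝ) / (1 - θ))) := by
      rw [Real.inv_rpow hC.le, ← Real.rpow_neg hC.le, hm]
    have e2 : (((k - 1) * r) ^ (1 - θ)) ^ m = (k - 1) ^ (n : ℝ) * r ^ (n : ℝ) := by
      rw [← Real.rpow_mul (by positivity : (0:ℝ) ≤ (k - 1) * r),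
        show (1 - θ) * m = (n : ℝ) by rw [hm]; field_simp,
        Real.mul_rpow hk1.le hr.le]
    have e3 : (k ^ (-((n : ℝ) * a))) ^ m
        = k ^ (-((n : ℝ) ^ 2 * θ / (s * (1 - θ)) + (n : ℝ) ^ 2 / q)) := by
      rw [← Real.rpow_mul hk0.le]
      congr 1
      rw [hm, ha]
      field_simp
    rw [hRinv, Real.mul_rpow (by positivity) (by positivity),
      Real.mul_rpow (by positivity) (by positivity), e1, e2, e3]
    ring
  linarith [hfinal, hcomp.ge]
end

section
/- Let n ≥ 2 be an integer, C > 0, and k > 1. Let V : (0,∞) → ℝ be a function with V(r) > 0 for all r > 0 such that for every r > 0: (i) V(r)^{1+2/n} ≤ C · ((k−1)r)^{−2} · V(kr)^{1+4/n}, and (ii) V(kr) ≤ kⁿ · V(r). Then for every r > 0, V(r) ≥ (k−1)ⁿ · C^{−n/2} · k^{−n(n+4)/2} · rⁿ. -/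
/-- Abstract volume estimate underlying Corollary 2.1 (Nash inequality case). -/
theorem stmt_5 (n : ℕ) (hn : 2 ≤ n) (C k : ℝ) (hC : 0 < C) (hk : 1 < k)
    (V : ℝ → ℝ) (hpos : ∀ r : ℝ, 0 < r → 0 < V r)
    (hineq : ∀ r : ℝ, 0 < r →
      V r ^ (1 + 2 / (n : ℝ)) ≤ C * ((k - 1) * r) ^ (-(2 : ℝ)) * V (k * r) ^ (1 + 4 / (n : ℝ)))
    (hdoubling : ∀ r : ℝ, 0 < r → V (k * r) ≤ k ^ (n : ℝ) * V r) :
    ∀ r : ℝ, 0 < r →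
      V r ≥ (k - 1) ^ (n : ℝ) * C ^ (-(n : ℝ) / 2) *
        k ^ (-((n : ℝ) * ((n : ℝ) + 4) / 2)) * r ^ (n : ℝ) := by
  intro r hr
  have hnR : (0:ℝ) < (n:ℝ) := by exact_mod_cast (by omega : 0 < n)
  have hk0 : (0:ℝ) < k := by linarith
  have hk1 : (0:ℝ) < k - 1 := by linarith
  have ha : 0 < V r := hpos r hr
  have hkr : 0 < k * r := by positivity
  have hb : 0 < V (k*r) := hpos _ hkr
  have hkr1 : 0 < (k-1) * r := by positivity
  set a := V r with haa
  set e : ℝ := 1 + 2 / (n:ℝ)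
  have he : (0:ℝ) ≤ 1 + 4 / (n:ℝ) := by positivity
  -- step 1: bound b^(1+4/n)
  have h2 : V (k*r) ^ (1 + 4/(n:ℝ)) ≤ k ^ ((n:ℝ) + 4) * a ^ (1 + 4/(n:ℝ)) := by
    calc V (k*r) ^ (1 + 4/(n:ℝ)) ≤ (k ^ ((n:ℝ)) * a) ^ (1 + 4/(n:ℝ)) :=
          Real.rpow_le_rpow hb.le (hdoubling r hr) he
      _ = k ^ ((n:ℝ) + 4) * a ^ (1 + 4/(n:ℝ)) := by
          rw [Real.mul_rpow (by positivity) ha.le, ← Real.rpow_mul hk0.le]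
          congr 2
          field_simp
  have h1 := hineq r hr
  -- combine
  have h3 : a ^ e ≤ (C * ((k-1)*r) ^ (-(2:ℝ)) * k ^ ((n:ℝ)+4) * a ^ (2/(n:ℝ))) * a ^ e := by
    have hsplit : a ^ (1 + 4/(n:ℝ)) = a ^ (2/(n:ℝ)) * a ^ e := by
      rw [← Real.rpow_add ha]; congr 1; ring
    calc a ^ e ≤ C * ((k-1)*r) ^ (-(2:ℝ)) * V (k*r) ^ (1 + 4/(n:ℝ)) := h1
      _ ≤ C * ((k-1)*r) ^ (-(2:ℝ)) * (k ^ ((n:ℝ)+4) * a ^ (1 + 4/(n:ℝ))) := by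
          have hpos2 : (0:ℝ) ≤ C * ((k-1)*r) ^ (-(2:ℝ)) := by positivity
          nlinarith [h2]
      _ = (C * ((k-1)*r) ^ (-(2:ℝ)) * k ^ ((n:ℝ)+4) * a ^ (2/(n:ℝ))) * a ^ e := by
          rw [hsplit]; ring
  set D : ℝ := C * ((k-1)*r) ^ (-(2:ℝ)) * k ^ ((n:ℝ)+4) with hD
  have hDpos : 0 < D := by positivity
  have hae : 0 < a ^ e := Real.rpow_pos_of_pos ha e
  have h4 : 1 ≤ D * a ^ (2/(n:ℝ)) := by
    have := (mul_le_mul_iff_of_pos_right hae).mp (by linarith [h3] : 1 * a ^ e ≤ (D * a ^ (2/(n:ℝ))) * a ^ e)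
    linarith
  have h5 : D⁻¹ ≤ a ^ (2/(n:ℝ)) := by
    rw [inv_le_iff_one_le_mul₀' hDpos]
    linarith
  have h6 : (D⁻¹) ^ ((n:ℝ)/2) ≤ a := by
    have := Real.rpow_le_rpow (by positivity) h5 (by positivity : (0:ℝ) ≤ (n:ℝ)/2)
    rwa [← Real.rpow_mul ha.le, (by field_simp : (2/(n:ℝ)) * ((n:ℝ)/2) = 1), Real.rpow_one] at this
  have hlogD : Real.log D = Real.log C + (-(2:ℝ)) * (Real.log (k-1) + Real.log r) + ((n:ℝ)+4) * Real.log k := by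
    rw [hD, Real.log_mul (by positivity) (by positivity),
      Real.log_mul (by positivity) (by positivity),
      Real.log_rpow hkr1, Real.log_rpow hk0, Real.log_mul hk1.ne' hr.ne']
  have h7 : (D⁻¹) ^ ((n:ℝ)/2) = (k - 1) ^ (n:ℝ) * C ^ (-(n:ℝ) / 2) *
      k ^ (-((n:ℝ) * ((n:ℝ) + 4) / 2)) * r ^ (n:ℝ) := by
    rw [Real.rpow_def_of_pos (by positivity : (0:ℝ) < D⁻¹), Real.log_inv,
      Real.rpow_def_of_pos hk1, Real.rpow_def_of_pos hC, Real.rpow_def_of_pos hk0,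
      Real.rpow_def_of_pos hr, ← Real.exp_add, ← Real.exp_add, ← Real.exp_add,
      Real.exp_eq_exp, hlogD]
    ring
  linarith [h6, h7.symm.le]
end

section
/- Let n ≥ 2, let μ be the Lebesgue (volume) measure on the n-dimensional Euclidean space E = ℝⁿ, and let t, s, q ≥ 1, θ ∈ [0,1), C > 0. Suppose that for every Lipschitz function f : E → ℝ with compact support, (∫|f|^t dμ)^{1/t} ≤ C · (∫|f|^s dμ)^{θ/s} · (∫‖Df(x)‖^q dμ(x))^{(1−θ)/q}, where Df denotes the Fréchet derivative of f (interpreted as 0 where f is not differentiable). Then for every x₀ ∈ E and every 0 < r < R, μ(B(x₀,r))^{1/t} ≤ C · (R−r)^{−(1−θ)} · μ(closedBall(x₀,R))^{θ/s + (1−θ)/q}. -/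
open Metric MeasureTheory

/-- Ball-inequality derivation step in the proof of Theorem 1.3, on Euclidean space. -/
theorem stmt_8 (n : ℕ) (hn : 2 ≤ n) (t s q θ C : ℝ)
    (ht : 1 ≤ t) (hs : 1 ≤ s) (hq : 1 ≤ q) (hθ0 : 0 ≤ θ) (hθ1 : θ < 1) (hC : 0 < C)
    (hSob : ∀ f : EuclideanSpace ℝ (Fin n) → ℝ, (∃ K : NNReal, LipschitzWith K f) →
      HasCompactSupport f →
      (∫ x, |f x| ^ t ∂(volume : Measure (EuclideanSpace ℝ (Fin n)))) ^ (1 / t) ≤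
        C * (∫ x, |f x| ^ s ∂(volume : Measure (EuclideanSpace ℝ (Fin n)))) ^ (θ / s) *
          (∫ x, ‖fderiv ℝ f x‖ ^ q ∂(volume : Measure (EuclideanSpace ℝ (Fin n)))) ^
            ((1 - θ) / q)) :
    ∀ (x₀ : EuclideanSpace ℝ (Fin n)) (r R : ℝ), 0 < r → r < R →
      (volume (ball x₀ r)).toReal ^ (1 / t) ≤
        C * (R - r) ^ (-(1 - θ)) *
          (volume (closedBall x₀ R)).toReal ^ (θ / s + (1 - θ) / q) := by
  intro x₀ r R hr hrR
  have hD : (0:ℝ) < R - r := by linarith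
  set D : ℝ := R - r with hDdef
  set f : (EuclideanSpace ℝ (Fin n)) → ℝ :=
    fun x => max 0 (min 1 ((R - dist x x₀) / D)) with hfdef
  have ht0 : (0:ℝ) < t := by linarith
  have hs0 : (0:ℝ) < s := by linarith
  have hq0 : (0:ℝ) < q := by linarith
  have hf0 : ∀ x, 0 ≤ f x := fun x => le_max_left _ _
  have hf1 : ∀ x, f x ≤ 1 := fun x => max_le zero_le_one (min_le_left _ _)
  have hfball : ∀ x ∈ ball x₀ r, f x = 1 := by
    intro x hx
    have hxd : dist x x₀ < r := mem_ball.1 hx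
    have h1 : (1:ℝ) ≤ (R - dist x x₀) / D := by
      rw [le_div_iff₀ hD]; rw [hDdef]; linarith
    simp [hfdef, min_eq_left h1]
  have hfzero : ∀ x, R ≤ dist x x₀ → f x = 0 := by
    intro x hx
    have h1 : (R - dist x x₀) / D ≤ 0 :=
      div_nonpos_of_nonpos_of_nonneg (by linarith) hD.le
    simp only [hfdef]
    rw [max_eq_left (le_trans (min_le_right _ _) h1)]
  -- Lipschitz
  set K : NNReal := ⟨D⁻¹, by positivity⟩ with hK
  have hlip : LipschitzWith K f := by
    have houter : LipschitzWith 1 (fun u : ℝ => max 0 (min 1 u)) :=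
      (LipschitzWith.id.const_min 1).const_max 0
    have hinner : LipschitzWith K (fun u : ℝ => (R - u) / D) := by
      apply LipschitzWith.of_dist_le_mul
      intro u v
      rw [Real.dist_eq, Real.dist_eq]
      have : (R - u) / D - (R - v) / D = (v - u) / D := by field_simp; ring
      rw [this, abs_div, abs_of_pos hD]
      rw [abs_sub_comm, div_eq_inv_mul]
      exact le_of_eq rfl
    have hdist : LipschitzWith 1 (fun x : EuclideanSpace ℝ (Fin n) => dist x x₀) :=
      LipschitzWith.dist_left x₀
    have := (houter.comp hinner).comp hdist
    simp only [mul_one, one_mul] at this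
    exact this
  have hsupp : HasCompactSupport f := by
    apply HasCompactSupport.intro (isCompact_closedBall x₀ R)
    intro x hx
    exact hfzero x (le_of_lt (by simpa [not_le] using fun h => hx (mem_closedBall.2 h)))
  have hfcont : Continuous f := hlip.continuous
  set M : ℝ := (volume (closedBall x₀ R)).toReal with hM
  have hMpos : 0 < M := by
    rw [hM]
    have := measure_closedBall_pos (volume : Measure (EuclideanSpace ℝ (Fin n))) x₀
      (by linarith : (0:ℝ) < R)
    exact ENNReal.toReal_pos this.ne' (measure_closedBall_lt_top).ne
  -- integrable majorants
  have hindInt : ∀ c : ℝ, Integrable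
      ((closedBall x₀ R).indicator (fun _ => c))
      (volume : Measure (EuclideanSpace ℝ (Fin n))) := by
    intro c
    rw [integrable_indicator_iff measurableSet_closedBall]
    exact integrableOn_const measure_closedBall_lt_top.ne
  -- bound on s-integral
  have hB : (∫ x, |f x| ^ s ∂(volume : Measure (EuclideanSpace ℝ (Fin n)))) ≤ M := by
    have h := integral_mono_of_nonneg
      (f := fun x => |f x| ^ s)
      (g := (closedBall x₀ R).indicator (fun _ => (1:ℝ)))
      (Filter.Eventually.of_forall fun x => Real.rpow_nonneg (abs_nonneg _) s)
      (hindInt 1)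
      (Filter.Eventually.of_forall ?_)
    · rw [integral_indicator_const _ measurableSet_closedBall] at h
      simpa [hM, Measure.real] using h
    · intro x
      show |f x| ^ s ≤ (closedBall x₀ R).indicator (fun _ => (1:ℝ)) x
      by_cases hx : x ∈ closedBall x₀ R
      · rw [Set.indicator_of_mem hx]
        exact Real.rpow_le_one (abs_nonneg _) (abs_le.2 ⟨by linarith [hf0 x], hf1 x⟩) hs0.le
      · rw [Set.indicator_of_notMem hx, hfzero x (le_of_lt (by simpa [not_le] using hx)),
          abs_zero, Real.zero_rpow hs0.ne']
  have hBnn : 0 ≤ (∫ x, |f x| ^ s ∂(volume : Measure (EuclideanSpace ℝ (Fin n)))) :=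
    integral_nonneg fun x => Real.rpow_nonneg (abs_nonneg _) s
  -- bound on gradient integral
  have hfderiv_zero : ∀ x, x ∉ closedBall x₀ R → fderiv ℝ f x = 0 := by
    intro x hx
    have hRx : R < dist x x₀ := by simpa [not_le] using hx
    have heq : f =ᶠ[nhds x] (fun _ => (0:ℝ)) := by
      have hopen : IsOpen {y : EuclideanSpace ℝ (Fin n) | R < dist y x₀} :=
        isOpen_lt continuous_const (Continuous.dist continuous_id continuous_const)
      filter_upwards [hopen.mem_nhds hRx] with y hy
      exact hfzero y (le_of_lt hy)
    rw [heq.fderiv_eq, fderiv_fun_const]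
    rfl
  have hG : (∫ x, ‖fderiv ℝ f x‖ ^ q ∂(volume : Measure (EuclideanSpace ℝ (Fin n)))) ≤
      D⁻¹ ^ q * M := by
    have h := integral_mono_of_nonneg
      (f := fun x => ‖fderiv ℝ f x‖ ^ q)
      (g := (closedBall x₀ R).indicator (fun _ => D⁻¹ ^ q))
      (Filter.Eventually.of_forall fun x => Real.rpow_nonneg (norm_nonneg _) q)
      (hindInt _)
      (Filter.Eventually.of_forall ?_)
    · rw [integral_indicator_const _ measurableSet_closedBall] at h
      calc (∫ x, ‖fderiv ℝ f x‖ ^ q ∂(volume : Measure (EuclideanSpace ℝ (Fin n))))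
          ≤ (volume (closedBall x₀ R)).toReal • (D⁻¹ ^ q) := h
        _ = D⁻¹ ^ q * M := by rw [smul_eq_mul, hM]; ring
    · intro x
      show ‖fderiv ℝ f x‖ ^ q ≤ (closedBall x₀ R).indicator (fun _ => D⁻¹ ^ q) x
      by_cases hx : x ∈ closedBall x₀ R
      · rw [Set.indicator_of_mem hx]
        have hb : ‖fderiv ℝ f x‖ ≤ (K : ℝ) := norm_fderiv_le_of_lipschitz ℝ hlip
        have : (K : ℝ) = D⁻¹ := rfl
        rw [this] at hb
        exact Real.rpow_le_rpow (norm_nonneg _) hb hq0.le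
      · rw [Set.indicator_of_notMem hx, hfderiv_zero x hx]
        simp [Real.zero_rpow hq0.ne']
  have hGnn : 0 ≤ (∫ x, ‖fderiv ℝ f x‖ ^ q ∂(volume : Measure (EuclideanSpace ℝ (Fin n)))) :=
    integral_nonneg fun x => Real.rpow_nonneg (norm_nonneg _) q
  -- lower bound on t-integral
  have hA : (volume (ball x₀ r)).toReal ≤
      (∫ x, |f x| ^ t ∂(volume : Measure (EuclideanSpace ℝ (Fin n)))) := by
    have hint : Integrable (fun x => |f x| ^ t)
        (volume : Measure (EuclideanSpace ℝ (Fin n))) := by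
      apply Continuous.integrable_of_hasCompactSupport
      · exact hfcont.abs.rpow_const (fun x => Or.inr ht0.le)
      · apply hsupp.comp_left (g := fun y => |y| ^ t)
        simp [Real.zero_rpow ht0.ne']
    have h := integral_mono_of_nonneg
      (f := (ball x₀ r).indicator (fun _ => (1:ℝ)))
      (g := fun x => |f x| ^ t)
      (Filter.Eventually.of_forall fun x => Set.indicator_nonneg (fun _ _ => zero_le_one) x)
      hint
      (Filter.Eventually.of_forall ?_)
    · rw [integral_indicator_const _ measurableSet_ball] at h
      simpa [Measure.real] using h
    · intro x
      show (ball x₀ r).indicator (fun _ => (1:ℝ)) x ≤ |f x| ^ t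
      by_cases hx : x ∈ ball x₀ r
      · rw [Set.indicator_of_mem hx, hfball x hx]
        simp [Real.one_rpow]
      · rw [Set.indicator_of_notMem hx]
        exact Real.rpow_nonneg (abs_nonneg _) t
  -- combine
  have hSobf := hSob f ⟨K, hlip⟩ hsupp
  calc (volume (ball x₀ r)).toReal ^ (1 / t)
      ≤ (∫ x, |f x| ^ t ∂(volume : Measure (EuclideanSpace ℝ (Fin n)))) ^ (1 / t) :=
        Real.rpow_le_rpow ENNReal.toReal_nonneg hA (by positivity)
    _ ≤ C * (∫ x, |f x| ^ s ∂(volume : Measure (EuclideanSpace ℝ (Fin n)))) ^ (θ / s) *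
          (∫ x, ‖fderiv ℝ f x‖ ^ q ∂(volume : Measure (EuclideanSpace ℝ (Fin n)))) ^
            ((1 - θ) / q) := hSobf
    _ ≤ C * M ^ (θ / s) * (D⁻¹ ^ q * M) ^ ((1 - θ) / q) := by
        have h1 : (∫ x, |f x| ^ s ∂(volume : Measure (EuclideanSpace ℝ (Fin n)))) ^ (θ / s) ≤
            M ^ (θ / s) := Real.rpow_le_rpow hBnn hB (div_nonneg hθ0 hs0.le)
        have h2 : (∫ x, ‖fderiv ℝ f x‖ ^ q ∂(volume : Measure (EuclideanSpace ℝ (Fin n)))) ^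
            ((1 - θ) / q) ≤ (D⁻¹ ^ q * M) ^ ((1 - θ) / q) :=
          Real.rpow_le_rpow hGnn hG (div_nonneg (by linarith) hq0.le)
        apply mul_le_mul
        · exact mul_le_mul_of_nonneg_left h1 hC.le
        · exact h2
        · exact Real.rpow_nonneg hGnn _
        · positivity
    _ = C * D ^ (-(1 - θ)) * M ^ (θ / s + (1 - θ) / q) := by
        have e1 : (D⁻¹ ^ q * M) ^ ((1 - θ) / q) = D⁻¹ ^ (1 - θ) * M ^ ((1 - θ) / q) := by
          rw [Real.mul_rpow (by positivity) hMpos.le, ← Real.rpow_mul (by positivity)]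
          congr 1
          field_simp
        have e2 : D⁻¹ ^ (1 - θ) = D ^ (-(1 - θ)) := by
          rw [Real.inv_rpow hD.le, ← Real.rpow_neg hD.le]
        rw [e1, e2, Real.rpow_add hMpos]
        ring
end

section
/- Let n ≥ 2, let μ be the Lebesgue (volume) measure on the n-dimensional Euclidean space E = ℝⁿ, and let p, q ≥ 1, C > 0. Suppose that for every Lipschitz function f : E → ℝ with compact support, (∫|f|^p dμ)^{1/p} ≤ C · (∫‖Df(x)‖^q dμ(x))^{1/q}, where Df denotes the Fréchet derivative of f (interpreted as 0 where f is not differentiable). Then for every x₀ ∈ E and every r > 0, μ(B(x₀,r))^{1/p} ≤ (C/r) · μ(closedBall(x₀, 2r))^{1/q}. -/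
open Metric MeasureTheory

/-- Ball-inequality derivation step in the proof of Theorem 1.2, on Euclidean space. -/
theorem stmt_9 (n : ℕ) (hn : 2 ≤ n) (p q C : ℝ)
    (hp : 1 ≤ p) (hq : 1 ≤ q) (hC : 0 < C)
    (hSob : ∀ f : EuclideanSpace ℝ (Fin n) → ℝ, (∃ K : NNReal, LipschitzWith K f) →
      HasCompactSupport f →
      (∫ x, |f x| ^ p ∂(volume : Measure (EuclideanSpace ℝ (Fin n)))) ^ (1 / p) ≤
        C * (∫ x, ‖fderiv ℝ f x‖ ^ q ∂(volume : Measure (EuclideanSpace ℝ (Fin n)))) ^ (1 / q)) :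
    ∀ (x₀ : EuclideanSpace ℝ (Fin n)) (r : ℝ), 0 < r →
      (volume (ball x₀ r)).toReal ^ (1 / p) ≤
        (C / r) * (volume (closedBall x₀ (2 * r))).toReal ^ (1 / q) := by
  intro x₀ r hr
  set f : EuclideanSpace ℝ (Fin n) → ℝ := fun x => max 0 (min 1 (2 - dist x x₀ / r)) with hf
  have hr' : (0:ℝ) ≤ 1 / r := by positivity
  have hK : LipschitzWith ⟨1 / r, hr'⟩ f := by
    apply LipschitzWith.of_dist_le_mul
    intro x y
    simp only [Real.dist_eq, hf, NNReal.coe_mk]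
    calc |max 0 (min 1 (2 - dist x x₀ / r)) - max 0 (min 1 (2 - dist y x₀ / r))|
        ≤ |min 1 (2 - dist x x₀ / r) - min 1 (2 - dist y x₀ / r)| := by
          simpa [max_comm] using
            abs_max_sub_max_le_abs (min 1 (2 - dist x x₀ / r)) (min 1 (2 - dist y x₀ / r)) 0
      _ ≤ |2 - dist x x₀ / r - (2 - dist y x₀ / r)| := by
          simpa using abs_min_sub_min_le_max 1 (2 - dist x x₀ / r) 1 (2 - dist y x₀ / r)
      _ = |dist y x₀ - dist x x₀| / r := by
          rw [show 2 - dist x x₀ / r - (2 - dist y x₀ / r)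
              = (dist y x₀ - dist x x₀) / r by ring, abs_div, abs_of_pos hr]
      _ ≤ dist x y / r := by
          gcongr
          exact (abs_dist_sub_le y x x₀).trans_eq (dist_comm y x)
      _ = 1 / r * dist x y := by ring
  have hf0 : ∀ x ∉ closedBall x₀ (2 * r), f x = 0 := by
    intro x hx
    rw [mem_closedBall, not_le] at hx
    have : 2 - dist x x₀ / r < 0 := by
      rw [sub_neg]
      rw [lt_div_iff₀ hr]
      linarith
    simp [hf, max_eq_left ((min_le_right 1 _).trans this.le)]
  have hsupp : HasCompactSupport f :=
    HasCompactSupport.intro (isCompact_closedBall x₀ (2 * r)) hf0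
  have hf1 : ∀ x ∈ ball x₀ r, f x = 1 := by
    intro x hx
    rw [mem_ball] at hx
    have h1 : (1:ℝ) ≤ 2 - dist x x₀ / r := by
      rw [le_sub_iff_add_le]
      have : dist x x₀ / r < 1 := (div_lt_one hr).2 hx
      linarith
    simp [hf, min_eq_left h1]
  have hfnn : ∀ x, 0 ≤ f x := fun x => le_max_left _ _
  have hcont : Continuous f := hK.continuous
  -- lower bound on LHS integral
  have hp0 : (0:ℝ) < p := by linarith
  have hq0 : (0:ℝ) < q := by linarith
  have hint_fp : Integrable (fun x => |f x| ^ p) volume := by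
    apply Continuous.integrable_of_hasCompactSupport
    · exact (hcont.abs).rpow_const (fun x => Or.inr hp0.le)
    · apply hsupp.comp_left (g := fun t => |t| ^ p)
      simp [Real.zero_rpow hp0.ne']
  have hlow : (volume (ball x₀ r)).toReal ≤ ∫ x, |f x| ^ p := by
    have : ∫ x, (ball x₀ r).indicator (fun _ => (1:ℝ)) x ≤ ∫ x, |f x| ^ p := by
      apply integral_mono_of_nonneg
      · filter_upwards with x
        exact Set.indicator_nonneg (fun _ _ => zero_le_one) x
      · exact hint_fp
      · filter_upwards with x
        by_cases hx : x ∈ ball x₀ r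
        · rw [Set.indicator_of_mem hx, hf1 x hx]
          simp
        · rw [Set.indicator_of_notMem hx]
          positivity
    rwa [integral_indicator_const _ measurableSet_ball, smul_eq_mul, mul_one] at this
  -- upper bound on RHS integral
  have hderiv_bd : ∀ x, ‖fderiv ℝ f x‖ ^ q ≤
      (closedBall x₀ (2 * r)).indicator (fun _ => (1 / r) ^ q) x := by
    intro x
    by_cases hx : x ∈ closedBall x₀ (2 * r)
    · rw [Set.indicator_of_mem hx]
      apply Real.rpow_le_rpow (norm_nonneg _) ?_ hq0.le
      exact norm_fderiv_le_of_lipschitz ℝ hK (x₀ := x)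
    · rw [Set.indicator_of_notMem hx]
      have hopen : IsOpen (closedBall x₀ (2 * r))ᶜ := isClosed_closedBall.isOpen_compl
      have hev : f =ᶠ[nhds x] (fun _ => (0:ℝ)) := by
        filter_upwards [hopen.mem_nhds hx] with y hy
        exact hf0 y hy
      rw [hev.fderiv_eq, fderiv_fun_const]
      simp [Real.zero_rpow hq0.ne']
  have hup : ∫ x, ‖fderiv ℝ f x‖ ^ q ≤
      (volume (closedBall x₀ (2 * r))).toReal * (1 / r) ^ q := by
    have hind : Integrable ((closedBall x₀ (2 * r)).indicator (fun _ => (1 / r) ^ q))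
        volume := by
      apply (integrable_indicator_iff measurableSet_closedBall).2
      refine integrableOn_const ?_
      exact measure_closedBall_lt_top.ne
    have := integral_mono_of_nonneg (f := fun x => ‖fderiv ℝ f x‖ ^ q)
      (g := (closedBall x₀ (2 * r)).indicator (fun _ => (1 / r) ^ q))
      (Filter.Eventually.of_forall fun x => by positivity) hind
      (Filter.Eventually.of_forall hderiv_bd)
    rwa [integral_indicator_const _ measurableSet_closedBall, smul_eq_mul] at this
  -- combine
  have key := hSob f ⟨_, hK⟩ hsupp
  have h1 : (volume (ball x₀ r)).toReal ^ (1 / p) ≤ (∫ x, |f x| ^ p) ^ (1 / p) :=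
    Real.rpow_le_rpow ENNReal.toReal_nonneg hlow (by positivity)
  have hRnn : (0:ℝ) ≤ ∫ x, ‖fderiv ℝ f x‖ ^ q :=
    integral_nonneg fun x => by positivity
  have h2 : (∫ x, ‖fderiv ℝ f x‖ ^ q) ^ (1 / q) ≤
      ((volume (closedBall x₀ (2 * r))).toReal * (1 / r) ^ q) ^ (1 / q) :=
    Real.rpow_le_rpow hRnn hup (by positivity)
  have h3 : ((volume (closedBall x₀ (2 * r))).toReal * (1 / r) ^ q) ^ (1 / q) =
      (volume (closedBall x₀ (2 * r))).toReal ^ (1 / q) * (1 / r) := by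
    rw [Real.mul_rpow ENNReal.toReal_nonneg (by positivity)]
    congr 1
    rw [one_div q, Real.rpow_rpow_inv (by positivity) hq0.ne']
  calc (volume (ball x₀ r)).toReal ^ (1 / p)
      ≤ (∫ x, |f x| ^ p) ^ (1 / p) := h1
    _ ≤ C * (∫ x, ‖fderiv ℝ f x‖ ^ q) ^ (1 / q) := key
    _ ≤ C * ((volume (closedBall x₀ (2 * r))).toReal * (1 / r) ^ q) ^ (1 / q) := by
        exact mul_le_mul_of_nonneg_left h2 hC.le
    _ = (C / r) * (volume (closedBall x₀ (2 * r))).toReal ^ (1 / q) := by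
        rw [h3]; ring
end
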